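/- Let u be a unitary in O_2 and let α : O_2 → O_2 be a unital *-homomorphism with α(S_1) = uS_1 and α(S_2) = uS_2, such that α(T) ⊆ V. Then u ∈ V if and only if α(D_2) ⊆ D_2. -/

import Mathlib

open scoped BigOperators

variable {A : Type*} [CStarAlgebra A] [PartialOrder A] [StarOrderedRing A]

/-- `Sw S μ = S_{μ_1} ⋯ S_{μ_k}`. -/
def Sw {n : ℕ} (S : Fin n → A) (μ : List (Fin n)) : A := (μ.map S).prod

/-- `Pw S μ = S_μ S_μ*`. -/
def Pw {n : ℕ} (S : Fin n → A) (μ : List (Fin n)) : A := Sw S μ * star (Sw S μ)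

/-- The set 𝒱_n of finite sums ∑ S_α S_β*. -/
def Vset {n : ℕ} (S : Fin n → A) : Set A :=
  {x | ∃ J : Finset (List (Fin n) × List (Fin n)),
      x = ∑ p ∈ J, Sw S p.1 * star (Sw S p.2)}

/-- The Thompson-like group `S_n = 𝒱_n ∩ U(O_n)`; for n = 2 this is Thompson's group V. -/
def Vgrp {n : ℕ} (S : Fin n → A) : Set A := Vset S ∩ (unitary A : Set A)

/-- The diagonal D_n: closed linear span of the projections P_μ. -/
def Ddiag {n : ℕ} (S : Fin n → A) : Set A :=
  ((Submodule.span ℂ (Set.range (Pw S))).topologicalClosure : Submodule ℂ A)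

/-- Projection: self-adjoint idempotent. -/
def IsProjection (p : A) : Prop := IsSelfAdjoint p ∧ p * p = p

/-- Concatenation ν_1 ν_2 ⋯ ν_k. -/
def wcat {n : ℕ} (ν : ℕ → List (Fin n)) (k : ℕ) : List (Fin n) :=
  ((List.range k).map ν).flatten

/-- Modestly scaling endomorphism. -/
def ModestlyScaling {n : ℕ} (S : Fin n → A) (α : A →⋆ₐ[ℂ] A) : Prop :=
  ∀ ν : ℕ → List (Fin n), (∀ k, ν k ≠ []) →
    ∀ p : A, IsProjection p → (∀ k : ℕ, p ≤ α (Pw S (wcat ν (k + 1)))) → p = 0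

/-- Generator x_0 of Thompson's group F inside U(O_2). -/
def x0 (S : Fin 2 → A) : A :=
  S 0 * S 0 * star (S 0) + S 0 * S 1 * star (S 0) * star (S 1) + S 1 * star (S 1) * star (S 1)

/-- Generators x_k of Thompson's group F inside U(O_2). -/
def xgen (S : Fin 2 → A) : ℕ → A
  | 0 => x0 S
  | k + 1 => 1 - S 1 ^ (k + 1) * star (S 1 ^ (k + 1)) + S 1 ^ (k + 1) * x0 S * star (S 1 ^ (k + 1))

/-- Thompson's group F inside U(O_2): the subgroup generated by the x_k
(as a set: the submonoid generated by the x_k and their adjoints = inverses). -/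
def Fgrp (S : Fin 2 → A) : Set A :=
  (Submonoid.closure (Set.range (xgen S) ∪ star '' Set.range (xgen S)) : Set A)

/-- The extra generator for Thompson's group T. -/
def tgen (S : Fin 2 → A) : A :=
  S 1 * S 1 * star (S 0) + S 0 * star (S 0) * star (S 1) + S 1 * S 0 * star (S 1) * star (S 1)

/-- Thompson's group T inside U(O_2). -/
def Tgrp (S : Fin 2 → A) : Set A :=
  (Submonoid.closure ((Set.range (xgen S) ∪ {tgen S}) ∪
      star '' (Set.range (xgen S) ∪ {tgen S})) : Set A)

/-- `IsOneW S w p`: p is the largest projection in D_n with p w = p, i.e. p = 𝟙_w. -/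
def IsOneW {n : ℕ} (S : Fin n → A) (w p : A) : Prop :=
  p ∈ Ddiag S ∧ IsProjection p ∧ p * w = p ∧
    ∀ p' : A, p' ∈ Ddiag S → IsProjection p' → p' * w = p' → p' ≤ p

/-- min(q) = inf { |μ| : P_μ ≤ q } ∈ ℕ ∪ {∞}. -/
noncomputable def minProj {n : ℕ} (S : Fin n → A) (q : A) : ℕ∞ :=
  ⨅ μ ∈ {μ : List (Fin n) | Pw S μ ≤ q}, (μ.length : ℕ∞)

/-- The core UHF subalgebra F_n: closed linear span of {S_μ S_ν* : |μ| = |ν|}. -/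
def UHF {n : ℕ} (S : Fin n → A) : Set A :=
  ((Submodule.span ℂ {x : A | ∃ μ ν : List (Fin n), μ.length = ν.length ∧
      x = Sw S μ * star (Sw S ν)}).topologicalClosure : Submodule ℂ A)

/-- μ ≺ ν : at the first index where μ and ν differ, the letter of μ is smaller. -/
def WordLt {n : ℕ} (μ ν : List (Fin n)) : Prop :=
  ∃ σ : List (Fin n), ∃ a b : Fin n, a < b ∧ (σ ++ [a]) <+: μ ∧ (σ ++ [b]) <+: ν

section CuntzWords

variable {A : Type*} [CStarAlgebra A] [PartialOrder A] [StarOrderedRing A]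
variable {S : Fin 2 → A}

@[simp] lemma Sw_nil : Sw S ([] : List (Fin 2)) = 1 := rfl

@[simp] lemma Sw_cons (i : Fin 2) (μ : List (Fin 2)) : Sw S (i :: μ) = S i * Sw S μ := by
  simp [Sw]

lemma Sw_append (μ ν : List (Fin 2)) : Sw S (μ ++ ν) = Sw S μ * Sw S ν := by
  simp [Sw]

section rel
variable (hiso : ∀ i, star (S i) * S i = 1)
  (hsum : S 0 * star (S 0) + S 1 * star (S 1) = 1)

include hiso hsum in
lemma Srel : ∀ i j : Fin 2, star (S i) * S j = if i = j then 1 else 0 := by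
  have key : ∀ i j : Fin 2, i ≠ j → star (S i) * S j = 0 := by
    intro i j hij
    have h1 : S i * (star (S i) * S j) + S j * (star (S j) * S j) = S j := by
      have := congrArg (fun x => x * S j) hsum
      have h2 : i = 0 ∧ j = 1 ∨ i = 1 ∧ j = 0 := by omega
      rcases h2 with ⟨hi, hj⟩ | ⟨hi, hj⟩ <;> subst hi <;> subst hj <;>
        simpa [add_mul, mul_assoc, add_comm] using this
    rw [hiso j, mul_one] at h1
    have h3 : S i * (star (S i) * S j) = 0 := by
      have := congrArg (fun x => x - S j) h1
      simpa [add_sub_cancel_right] using this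
    have h4 : star (S i) * (S i * (star (S i) * S j)) = 0 := by rw [h3, mul_zero]
    rwa [← mul_assoc, hiso i, one_mul] at h4
  intro i j
  by_cases h : i = j
  · subst h; simp [hiso i]
  · simp [h, key i j h]

include hiso hsum in
lemma starSw_Sw (μ : List (Fin 2)) : star (Sw S μ) * Sw S μ = 1 := by
  induction μ with
  | nil => simp
  | cons i μ ih =>
      simp only [Sw_cons, star_mul]
      calc star (Sw S μ) * star (S i) * (S i * Sw S μ)
          = star (Sw S μ) * ((star (S i) * S i) * Sw S μ) := by simp only [mul_assoc]
        _ = 1 := by rw [hiso i, one_mul, ih]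

include hiso hsum in
lemma starSw_Sw_append (μ δ : List (Fin 2)) :
    star (Sw S μ) * Sw S (μ ++ δ) = Sw S δ := by
  rw [Sw_append, ← mul_assoc, starSw_Sw hiso hsum, one_mul]

include hiso hsum in
lemma starSw_Sw_prefix {μ ν : List (Fin 2)} (h : μ <+: ν) :
    star (Sw S μ) * Sw S ν = Sw S (ν.drop μ.length) := by
  obtain ⟨d, rfl⟩ := h
  rw [starSw_Sw_append hiso hsum, List.drop_left]

include hiso hsum in
lemma starSw_Sw_zero : ∀ (μ ν : List (Fin 2)), ¬ (μ <+: ν) → ¬ (ν <+: μ) →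
    star (Sw S μ) * Sw S ν = 0 := by
  intro μ
  induction μ with
  | nil => intro ν h1 _; exact absurd (List.nil_prefix) h1
  | cons i μ ih =>
      intro ν h1 h2
      match ν with
      | [] => exact absurd (List.nil_prefix) h2
      | j :: ν =>
          by_cases hij : i = j
          · subst hij
            have h1' : ¬ (μ <+: ν) := fun h => h1 (List.cons_prefix_cons.mpr ⟨rfl, h⟩)
            have h2' : ¬ (ν <+: μ) := fun h => h2 (List.cons_prefix_cons.mpr ⟨rfl, h⟩)
            calc star (S i * Sw S μ) * (S i * Sw S ν)
                = star (Sw S μ) * ((star (S i) * S i) * Sw S ν) := by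
                  simp only [star_mul, mul_assoc]
              _ = 0 := by rw [hiso i, one_mul, ih ν h1' h2']
          · calc star (S i * Sw S μ) * (S j * Sw S ν)
                = star (Sw S μ) * ((star (S i) * S j) * Sw S ν) := by
                  simp only [star_mul, mul_assoc]
              _ = 0 := by rw [Srel hiso hsum i j, if_neg hij]; simp

end rel
end CuntzWords

set_option linter.unusedSectionVars false

section Levels

variable {A : Type*} [CStarAlgebra A] [PartialOrder A] [StarOrderedRing A]
variable {S : Fin 2 → A}

/-- All words of length `k`. -/
def Wd : ℕ → Finset (List (Fin 2))
  | 0 => {[]}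
  | k+1 => ((Wd k).image (fun l => l ++ [0])) ∪ ((Wd k).image (fun l => l ++ [1]))

lemma length_of_mem_Wd : ∀ {k : ℕ} {l : List (Fin 2)}, l ∈ Wd k → l.length = k := by
  intro k
  induction k with
  | zero => intro l hl; simp [Wd] at hl; simp [hl]
  | succ k ih =>
      intro l hl
      simp only [Wd, Finset.mem_union, Finset.mem_image] at hl
      rcases hl with ⟨m, hm, rfl⟩ | ⟨m, hm, rfl⟩ <;> simp [ih hm]

lemma mem_Wd_of_length : ∀ {k : ℕ} {l : List (Fin 2)}, l.length = k → l ∈ Wd k := by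
  intro k
  induction k with
  | zero => intro l hl; simp [Wd, List.eq_nil_of_length_eq_zero hl]
  | succ k ih =>
      intro l hl
      have hne : l ≠ [] := by rintro rfl; simp at hl
      have hdec : l.dropLast ++ [l.getLast hne] = l := List.dropLast_append_getLast hne
      have hlen : l.dropLast.length = k := by
        rw [List.length_dropLast, hl]
        omega
      have hmem := ih hlen
      simp only [Wd, Finset.mem_union, Finset.mem_image]
      rcases (by omega : (l.getLast hne : Fin 2) = 0 ∨ l.getLast hne = 1) with h | h
      · exact Or.inl ⟨l.dropLast, hmem, by rw [← h, hdec]⟩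
      · exact Or.inr ⟨l.dropLast, hmem, by rw [← h, hdec]⟩

lemma snoc_injective (i : Fin 2) : Function.Injective (fun l : List (Fin 2) => l ++ [i]) :=
  fun _ _ h => List.append_left_injective [i] h

lemma Wd_disj (k : ℕ) :
    Disjoint ((Wd k).image (fun l => l ++ [0])) ((Wd k).image (fun l => l ++ [1])) := by
  rw [Finset.disjoint_left]
  rintro a ha hb
  simp only [Finset.mem_image] at ha hb
  obtain ⟨m, _, rfl⟩ := ha
  obtain ⟨m', _, h⟩ := hb
  have := congrArg (fun l : List (Fin 2) => l.getLast?) h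
  simp at this

section rel
variable (hiso : ∀ i, star (S i) * S i = 1)
  (hsum : S 0 * star (S 0) + S 1 * star (S 1) = 1)

include hsum in
lemma Pw_snoc_sum (l : List (Fin 2)) :
    Pw S (l ++ [0]) + Pw S (l ++ [1]) = Pw S l := by
  have h : ∀ i : Fin 2, Pw S (l ++ [i]) = Sw S l * (S i * star (S i)) * star (Sw S l) := by
    intro i
    simp only [Pw, Sw_append, Sw_cons, Sw_nil, mul_one, star_mul, mul_assoc]
  rw [h 0, h 1, Pw]
  calc Sw S l * (S 0 * star (S 0)) * star (Sw S l) + Sw S l * (S 1 * star (S 1)) * star (Sw S l)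
      = Sw S l * ((S 0 * star (S 0) + S 1 * star (S 1)) * star (Sw S l)) := by
        simp only [mul_add, add_mul, mul_assoc]
    _ = Sw S l * star (Sw S l) := by rw [hsum, one_mul]

include hiso hsum in
lemma sum_Wd_Pw : ∀ k : ℕ, ∑ l ∈ Wd k, Pw S l = 1 := by
  intro k
  induction k with
  | zero => simp [Wd, Pw]
  | succ k ih =>
      rw [Wd, Finset.sum_union (Wd_disj k), Finset.sum_image (fun a _ b _ h => snoc_injective 0 h),
        Finset.sum_image (fun a _ b _ h => snoc_injective 1 h), ← Finset.sum_add_distrib]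
      rw [← ih]
      exact Finset.sum_congr rfl fun l _ => Pw_snoc_sum hsum l

include hiso hsum in
lemma word_refine (a b : List (Fin 2)) (j : ℕ) :
    Sw S a * star (Sw S b) = ∑ l ∈ Wd j, Sw S (a ++ l) * star (Sw S (b ++ l)) := by
  have : ∀ l, Sw S (a ++ l) * star (Sw S (b ++ l)) = Sw S a * Pw S l * star (Sw S b) := by
    intro l
    simp only [Pw, Sw_append, star_mul, mul_assoc]
  rw [Finset.sum_congr rfl fun l _ => this l]
  rw [← Finset.sum_mul, ← Finset.mul_sum, sum_Wd_Pw hiso hsum j, mul_one]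

include hiso hsum in
lemma Pw_refine (μ : List (Fin 2)) (j : ℕ) :
    Pw S μ = ∑ l ∈ Wd j, Pw S (μ ++ l) := by
  simpa only [Pw] using word_refine hiso hsum μ μ j

include hiso hsum in
lemma Pw_orth {k : ℕ} {l m : List (Fin 2)} (hl : l ∈ Wd k) (hm : m ∈ Wd k) (hne : l ≠ m) :
    star (Sw S l) * Sw S m = 0 := by
  have h1 : l.length = m.length := by rw [length_of_mem_Wd hl, length_of_mem_Wd hm]
  refine starSw_Sw_zero hiso hsum l m (fun h => hne (h.eq_of_length h1))
    (fun h => hne (h.eq_of_length h1.symm).symm)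

end rel
end Levels

section VsetClosure

variable {A : Type*} [CStarAlgebra A] [PartialOrder A] [StarOrderedRing A]
variable {S : Fin 2 → A}
variable (hiso : ∀ i, star (S i) * S i = 1)
  (hsum : S 0 * star (S 0) + S 1 * star (S 1) = 1)

lemma vset_zero : (0 : A) ∈ Vset S := ⟨∅, by simp⟩

lemma vset_word (a b : List (Fin 2)) : Sw S a * star (Sw S b) ∈ Vset S :=
  ⟨{(a, b)}, by simp⟩

include hiso hsum in
lemma vset_add_word {x : A} (hx : x ∈ Vset S) (a b : List (Fin 2)) :
    x + Sw S a * star (Sw S b) ∈ Vset S := by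
  obtain ⟨J, rfl⟩ := hx
  set j := (J.sup fun p => p.1.length) + 1 with hj
  set E : Finset (List (Fin 2) × List (Fin 2)) := (Wd j).image (fun l => (a ++ l, b ++ l)) with hE
  have hdisj : Disjoint J E := by
    rw [Finset.disjoint_right]
    intro p hp hpJ
    simp only [hE, Finset.mem_image] at hp
    obtain ⟨l, hl, rfl⟩ := hp
    have h1 : (a ++ l).length = a.length + j := by simp [length_of_mem_Wd hl]
    have h2 : (a ++ l).length ≤ J.sup fun p => p.1.length :=
      Finset.le_sup (f := fun p : List (Fin 2) × List (Fin 2) => p.1.length) hpJ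
    omega
  refine ⟨J ∪ E, ?_⟩
  rw [Finset.sum_union hdisj]
  congr 1
  rw [hE, Finset.sum_image ?_]
  · exact word_refine hiso hsum a b j
  · intro p _ q _ h
    have h1 : a ++ p = a ++ q := congrArg Prod.fst h
    exact List.append_right_injective a h1

include hiso hsum in
lemma vset_add {x y : A} (hx : x ∈ Vset S) (hy : y ∈ Vset S) : x + y ∈ Vset S := by
  obtain ⟨K, rfl⟩ := hy
  induction K using Finset.induction with
  | empty => simpa using hx
  | @insert q K' hq ih =>
      rw [Finset.sum_insert hq, add_comm (Sw S q.1 * star (Sw S q.2)), ← add_assoc]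
      exact vset_add_word hiso hsum ih q.1 q.2

include hiso hsum in
lemma word_mul_word (a b c d : List (Fin 2)) :
    (Sw S a * star (Sw S b)) * (Sw S c * star (Sw S d)) ∈ Vset S := by
  by_cases h1 : b <+: c
  · obtain ⟨e, rfl⟩ := h1
    have : (Sw S a * star (Sw S b)) * (Sw S (b ++ e) * star (Sw S d))
        = Sw S (a ++ e) * star (Sw S d) := by
      calc Sw S a * star (Sw S b) * (Sw S (b ++ e) * star (Sw S d))
          = Sw S a * (star (Sw S b) * Sw S (b ++ e)) * star (Sw S d) := by
            simp only [mul_assoc]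
        _ = Sw S a * Sw S e * star (Sw S d) := by rw [starSw_Sw_append hiso hsum]
        _ = Sw S (a ++ e) * star (Sw S d) := by rw [Sw_append]
    rw [this]
    exact vset_word _ _
  · by_cases h2 : c <+: b
    · obtain ⟨e, rfl⟩ := h2
      have : (Sw S a * star (Sw S (c ++ e))) * (Sw S c * star (Sw S d))
          = Sw S a * star (Sw S (d ++ e)) := by
        have he : star (Sw S (c ++ e)) * Sw S c = star (Sw S e) := by
          calc star (Sw S (c ++ e)) * Sw S c = star (star (Sw S c) * Sw S (c ++ e)) := by
                simp [star_mul]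
            _ = star (Sw S e) := by rw [starSw_Sw_append hiso hsum]
        calc Sw S a * star (Sw S (c ++ e)) * (Sw S c * star (Sw S d))
            = Sw S a * (star (Sw S (c ++ e)) * Sw S c) * star (Sw S d) := by
              simp only [mul_assoc]
          _ = Sw S a * (star (Sw S e) * star (Sw S d)) := by rw [he]; simp only [mul_assoc]
          _ = Sw S a * star (Sw S (d ++ e)) := by rw [Sw_append, star_mul]
      rw [this]
      exact vset_word _ _
    · have : (Sw S a * star (Sw S b)) * (Sw S c * star (Sw S d)) = 0 := by
        calc (Sw S a * star (Sw S b)) * (Sw S c * star (Sw S d))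
            = Sw S a * ((star (Sw S b) * Sw S c) * star (Sw S d)) := by simp only [mul_assoc]
          _ = 0 := by rw [starSw_Sw_zero hiso hsum b c h1 h2]; simp
      rw [this]
      exact vset_zero

include hiso hsum in
lemma vset_mul {x y : A} (hx : x ∈ Vset S) (hy : y ∈ Vset S) : x * y ∈ Vset S := by
  obtain ⟨J, rfl⟩ := hx
  obtain ⟨K, rfl⟩ := hy
  rw [Finset.sum_mul_sum]
  have : ∀ T : Finset ((List (Fin 2) × List (Fin 2)) × (List (Fin 2) × List (Fin 2))),
      (∑ pq ∈ T, (Sw S pq.1.1 * star (Sw S pq.1.2)) * (Sw S pq.2.1 * star (Sw S pq.2.2))) ∈ Vset S := by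
    intro T
    induction T using Finset.induction with
    | empty => simpa using vset_zero
    | @insert q T' hq ih =>
        rw [Finset.sum_insert hq]
        exact vset_add hiso hsum (word_mul_word hiso hsum _ _ _ _) ih
  rw [← Finset.sum_product']
  exact this (J ×ˢ K)

lemma vset_one : (1 : A) ∈ Vset S := by
  have := vset_word (S := S) [] []
  simpa using this

end VsetClosure

section Diagonal

variable {A : Type*} [CStarAlgebra A] [PartialOrder A] [StarOrderedRing A]
variable {S : Fin 2 → A}
variable (hiso : ∀ i, star (S i) * S i = 1)
  (hsum : S 0 * star (S 0) + S 1 * star (S 1) = 1)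

include hiso hsum in
lemma Pw_comm (μ ν : List (Fin 2)) : Pw S μ * Pw S ν = Pw S ν * Pw S μ := by
  have key : ∀ a d : List (Fin 2), Pw S a * Pw S (a ++ d) = Pw S (a ++ d) ∧
      Pw S (a ++ d) * Pw S a = Pw S (a ++ d) := by
    intro a d
    constructor
    · calc Pw S a * Pw S (a ++ d)
          = Sw S a * (star (Sw S a) * Sw S (a ++ d)) * star (Sw S (a ++ d)) := by
            simp only [Pw, mul_assoc]
        _ = Sw S a * Sw S d * star (Sw S (a ++ d)) := by rw [starSw_Sw_append hiso hsum]
        _ = Pw S (a ++ d) := by rw [← Sw_append, Pw]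
    · have h1 : star (Sw S (a ++ d)) * Sw S a = star (Sw S d) := by
        calc star (Sw S (a ++ d)) * Sw S a = star (star (Sw S a) * Sw S (a ++ d)) := by
              simp [star_mul]
          _ = star (Sw S d) := by rw [starSw_Sw_append hiso hsum]
      calc Pw S (a ++ d) * Pw S a
          = Sw S (a ++ d) * (star (Sw S (a ++ d)) * Sw S a) * star (Sw S a) := by
            simp only [Pw, mul_assoc]
        _ = Sw S (a ++ d) * star (Sw S d) * star (Sw S a) := by rw [h1]
        _ = Sw S (a ++ d) * star (Sw S (a ++ d)) := by
            rw [Sw_append a d, star_mul]; simp only [mul_assoc]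
        _ = Pw S (a ++ d) := rfl
  by_cases h1 : μ <+: ν
  · obtain ⟨d, rfl⟩ := h1
    rw [(key μ d).1, (key μ d).2]
  · by_cases h2 : ν <+: μ
    · obtain ⟨d, rfl⟩ := h2
      rw [(key ν d).1, (key ν d).2]
    · have hz : ∀ a b : List (Fin 2), ¬ a <+: b → ¬ b <+: a → Pw S a * Pw S b = 0 := by
        intro a b ha hb
        calc Pw S a * Pw S b = Sw S a * ((star (Sw S a) * Sw S b) * star (Sw S b)) := by
              simp only [Pw, mul_assoc]
          _ = 0 := by rw [starSw_Sw_zero hiso hsum a b ha hb]; simp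
      rw [hz μ ν h1 h2, hz ν μ h2 h1]

include hiso hsum in
lemma Ddiag_comm {x : A} (hx : x ∈ Ddiag S) (μ : List (Fin 2)) :
    x * Pw S μ = Pw S μ * x := by
  let C : Submodule ℂ A :=
    { carrier := {y | ∀ ν, y * Pw S ν = Pw S ν * y}
      add_mem' := by intro a b ha hb ν; simp only [add_mul, mul_add, ha ν, hb ν]
      zero_mem' := by intro ν; simp
      smul_mem' := by intro c a ha ν; simp only [Algebra.smul_mul_assoc, Algebra.mul_smul_comm, ha ν] }
  have hC : IsClosed (C : Set A) := by
    have : (C : Set A) = ⋂ ν, {y | y * Pw S ν = Pw S ν * y} := by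
      ext y; simp [C, Set.mem_iInter]
    rw [this]
    exact isClosed_iInter fun ν =>
      isClosed_eq (continuous_id.mul continuous_const) (continuous_const.mul continuous_id)
  have hle : (Submodule.span ℂ (Set.range (Pw S))).topologicalClosure ≤ C := by
    apply Submodule.topologicalClosure_minimal
    · rw [Submodule.span_le]
      rintro y ⟨ν, rfl⟩
      intro ρ
      exact Pw_comm hiso hsum ν ρ
    · exact hC
  exact hle hx μ

lemma mem_Ddiag_iff {x : A} : x ∈ Ddiag S ↔
    x ∈ closure ((Submodule.span ℂ (Set.range (Pw S)) : Submodule ℂ A) : Set A) := by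
  constructor
  · intro h; exact h
  · intro h; exact h

include hiso hsum in
lemma span_level_rep {x : A} (hx : x ∈ Submodule.span ℂ (Set.range (Pw S))) :
    ∃ (k : ℕ) (c : List (Fin 2) → ℂ), x = ∑ l ∈ Wd k, c l • Pw S l := by
  have lift_one : ∀ (k : ℕ) (c : List (Fin 2) → ℂ),
      (∑ l ∈ Wd k, c l • Pw S l) = ∑ m ∈ Wd (k+1), c (m.take k) • Pw S m := by
    intro k c
    rw [show Wd (k+1) = ((Wd k).image (fun l => l ++ [0])) ∪ ((Wd k).image (fun l => l ++ [1])) from rfl,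
      Finset.sum_union (Wd_disj k), Finset.sum_image (fun a _ b _ h => snoc_injective 0 h),
      Finset.sum_image (fun a _ b _ h => snoc_injective 1 h), ← Finset.sum_add_distrib]
    refine Finset.sum_congr rfl fun l hl => ?_
    have hlen : l.length = k := length_of_mem_Wd hl
    have htake : ∀ i : Fin 2, (l ++ [i]).take k = l := by
      intro i; rw [← hlen]; exact List.take_left
    rw [htake 0, htake 1, ← smul_add, Pw_snoc_sum hsum l]
  have lift : ∀ (k j : ℕ) (c : List (Fin 2) → ℂ),
      ∃ c' : List (Fin 2) → ℂ, (∑ l ∈ Wd k, c l • Pw S l) = ∑ m ∈ Wd (k+j), c' m • Pw S m := by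
    intro k j c
    induction j with
    | zero => exact ⟨c, rfl⟩
    | succ j ih =>
        obtain ⟨c', hc'⟩ := ih
        refine ⟨fun m => c' (m.take (k+j)), ?_⟩
        rw [hc', lift_one (k+j) c']
        rfl
  induction hx using Submodule.span_induction with
  | mem y hy =>
      obtain ⟨μ, rfl⟩ := hy
      refine ⟨μ.length, fun l => if l = μ then 1 else 0, ?_⟩
      simp only [ite_smul, one_smul, zero_smul]
      rw [Finset.sum_ite_eq' (Wd μ.length) μ (fun l => Pw S l), if_pos (mem_Wd_of_length rfl)]
  | zero => exact ⟨0, 0, by simp⟩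
  | add y z _ _ ihy ihz =>
      obtain ⟨k1, c1, rfl⟩ := ihy
      obtain ⟨k2, c2, rfl⟩ := ihz
      obtain ⟨c1', h1⟩ := lift k1 (max k1 k2 - k1) c1
      obtain ⟨c2', h2⟩ := lift k2 (max k1 k2 - k2) c2
      rw [h1, h2, show k1 + (max k1 k2 - k1) = max k1 k2 by omega,
        show k2 + (max k1 k2 - k2) = max k1 k2 by omega, ← Finset.sum_add_distrib]
      exact ⟨max k1 k2, fun l => c1' l + c2' l, by simp [add_smul]⟩
  | smul c y _ ihy =>
      obtain ⟨k, c1, rfl⟩ := ihy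
      exact ⟨k, fun l => c * c1 l, by rw [Finset.smul_sum]; simp [smul_smul]⟩

include hiso hsum in
lemma proj_rep {p : A} (hmem : p ∈ Ddiag S) (hsa : star p = p) (hidem : p * p = p) :
    ∃ (k : ℕ) (I : Finset (List (Fin 2))), I ⊆ Wd k ∧ p = ∑ l ∈ I, Pw S l := by
  classical
  -- approximate p by a span element within 1/3
  have h3 : (0:ℝ) < 1/3 := by norm_num
  obtain ⟨y, hy, hdist⟩ := Metric.mem_closure_iff.mp (mem_Ddiag_iff.mp hmem) (1/3) h3
  obtain ⟨k, c, rfl⟩ := span_level_rep hiso hsum hy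
  set y : A := ∑ l ∈ Wd k, c l • Pw S l with hydef
  have hnorm : ‖p - y‖ < 1/3 := by rw [← dist_eq_norm]; exact hdist
  -- dichotomy for each atom
  have dich : ∀ l ∈ Wd k, p * Pw S l = 0 ∨ p * Pw S l = Pw S l := by
    intro l hl
    set e : A := Pw S l with he
    have hee : e * e = e := by
      calc e * e = Sw S l * (star (Sw S l) * Sw S l) * star (Sw S l) := by
            simp only [he, Pw, mul_assoc]
        _ = e := by rw [starSw_Sw hiso hsum, mul_one]; simp only [he, Pw]
    have hes : star e = e := by simp only [he, Pw, star_mul, star_star]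
    have hcomm : p * e = e * p := Ddiag_comm hiso hsum hmem l
    have hnorme : ‖e‖ ≤ 1 := by
      have h1 : ‖e‖ * ‖e‖ = ‖e‖ := by
        calc ‖e‖ * ‖e‖ = ‖star e * e‖ := (CStarRing.norm_star_mul_self).symm
          _ = ‖e‖ := by rw [hes, hee]
      nlinarith [norm_nonneg e]
    have heye : e * y * e = c l • e := by
      rw [hydef, Finset.mul_sum, Finset.sum_mul]
      rw [Finset.sum_eq_single l]
      · rw [mul_smul_comm, smul_mul_assoc, ← he, hee, hee]
      · intro m hm hne
        have hz : e * Pw S m = 0 := by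
          calc e * Pw S m = Sw S l * ((star (Sw S l) * Sw S m) * star (Sw S m)) := by
                simp only [he, Pw, mul_assoc]
            _ = 0 := by rw [Pw_orth hiso hsum hl hm (Ne.symm hne)]; simp
        rw [mul_smul_comm, smul_mul_assoc, hz, zero_mul, smul_zero]
      · intro h; exact absurd hl h
    have hepe : e * p * e = p * e := by
      rw [← hcomm, mul_assoc, hee]
    have heq : e * (y - p) * e = c l • e - p * e := by
      rw [mul_sub, sub_mul, heye, hepe]
    have hkey : ‖c l • e - p * e‖ < 1/3 := by
      rw [← heq]
      have hb1 := norm_mul_le (e * (y - p)) e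
      have hb2 := norm_mul_le e (y - p)
      have hyp : ‖y - p‖ < 1/3 := by rw [norm_sub_rev]; exact hnorm
      nlinarith [norm_nonneg (y - p), norm_nonneg e, norm_nonneg (e * (y - p))]
    by_cases hr0 : p * e = 0
    · exact Or.inl hr0
    by_cases hre : p * e = e
    · exact Or.inr hre
    exfalso
    have hnpe : 0 < ‖p * e‖ := by
      rcases (norm_nonneg (p * e)).lt_or_eq with h | h
      · exact h
      · exact absurd (norm_eq_zero.mp h.symm) hr0
    have hepe2 : e * (p * e) = p * e := by
      rw [← mul_assoc, ← hcomm, mul_assoc, hee]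
    have hpepe : (p * e) * (p * e) = p * e := by
      have h2 : (p * e) * (p * e) = p * p * (e * e) := by
        calc (p * e) * (p * e) = p * ((e * p) * e) := by simp only [mul_assoc]
          _ = p * ((p * e) * e) := by rw [← hcomm]
          _ = p * p * (e * e) := by simp only [mul_assoc]
      rw [h2, hidem, hee]
    have hq1 : (c l • e - p * e) * (p * e) = (c l - 1) • (p * e) := by
      rw [sub_mul, smul_mul_assoc, hepe2, hpepe, sub_smul, one_smul]
    have hcl1 : ‖c l - 1‖ < 1/3 := by
      have hb := norm_mul_le (c l • e - p * e) (p * e)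
      rw [hq1, norm_smul] at hb
      have : ‖c l - 1‖ * ‖p * e‖ < (1/3) * ‖p * e‖ := by
        calc ‖c l - 1‖ * ‖p * e‖ ≤ ‖c l • e - p * e‖ * ‖p * e‖ := hb
          _ < (1/3) * ‖p * e‖ := by
            exact mul_lt_mul_of_pos_right hkey hnpe
      exact lt_of_mul_lt_mul_right (by linarith) (le_of_lt hnpe)
    have hq2 : (c l • e - p * e) * (e - p * e) = c l • (e - p * e) := by
      rw [sub_mul, mul_sub, mul_sub, smul_mul_assoc, smul_mul_assoc, hee, hepe2, hpepe]
      have hpee : (p * e) * e = p * e := by rw [mul_assoc, hee]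
      rw [hpee, smul_sub]
      abel
    have hne2 : 0 < ‖e - p * e‖ := by
      rcases (norm_nonneg (e - p * e)).lt_or_eq with h | h
      · exact h
      · exfalso
        exact hre (sub_eq_zero.mp (norm_eq_zero.mp h.symm)).symm
    have hcl0 : ‖c l‖ < 1/3 := by
      have hb := norm_mul_le (c l • e - p * e) (e - p * e)
      rw [hq2, norm_smul] at hb
      have : ‖c l‖ * ‖e - p * e‖ < (1/3) * ‖e - p * e‖ :=
        lt_of_le_of_lt hb (mul_lt_mul_of_pos_right hkey hne2)
      exact lt_of_mul_lt_mul_right (by linarith) (le_of_lt hne2)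
    have : (1:ℝ) ≤ ‖c l - 1‖ + ‖c l‖ := by
      have h4 : ‖(c l - 1) - c l‖ = 1 := by
        rw [show (c l - 1) - c l = -1 by ring]
        simp
      calc (1:ℝ) = ‖(c l - 1) - c l‖ := h4.symm
        _ ≤ ‖c l - 1‖ + ‖c l‖ := norm_sub_le _ _
    linarith
  -- assemble
  have hpart : ∑ l ∈ Wd k, Pw S l = 1 := sum_Wd_Pw hiso hsum k
  have hp1 : p = ∑ l ∈ Wd k, p * Pw S l := by
    rw [← Finset.mul_sum, hpart, mul_one]
  refine ⟨k, (Wd k).filter (fun l => p * Pw S l = Pw S l), Finset.filter_subset _ _, ?_⟩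
  rw [Finset.sum_filter]
  conv_lhs => rw [hp1]
  refine Finset.sum_congr rfl fun l hl => ?_
  split_ifs with hc
  · rw [hc]
  · rcases dich l hl with h0 | h1
    · exact h0
    · exact absurd h1 hc

end Diagonal

section SingleWord

variable {A : Type*} [CStarAlgebra A] [PartialOrder A] [StarOrderedRing A]
variable {S : Fin 2 → A}
variable (hiso : ∀ i, star (S i) * S i = 1)
  (hsum : S 0 * star (S 0) + S 1 * star (S 1) = 1)

lemma all_zero (h : (1:A) = 0) (x : A) : x = 0 := by
  calc x = x * 1 := (mul_one x).symm
    _ = 0 := by rw [h, mul_zero]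

/-- The test word 0^L 1 is not a prefix of d ++ 0^L 1 for nonempty short d. -/
lemma mu_not_prefix (L : ℕ) (d : List (Fin 2)) (hd : d ≠ []) (hdL : d.length ≤ L) :
    ¬ ((List.replicate L (0:Fin 2) ++ [1]) <+: (d ++ (List.replicate L (0:Fin 2) ++ [1]))) := by
  intro h
  set μ : List (Fin 2) := List.replicate L 0 ++ [1] with hμ
  have hlenμ : μ.length = L + 1 := by simp [hμ]
  -- μ = (d ++ μ).take (L+1)
  have h1 : μ = (d ++ μ).take (L + 1) := by
    rw [← hlenμ]; exact List.prefix_iff_eq_take.mp h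
  -- d = μ.take d.length
  have h2 : d = μ.take d.length := by
    have := congrArg (fun l : List (Fin 2) => l.take d.length) h1
    simpa [List.take_take, Nat.min_eq_left (by omega : d.length ≤ L + 1),
      List.take_left] using this.symm
  have h3 : d = List.replicate d.length 0 := by
    conv_lhs => rw [h2]
    rw [hμ, List.take_append_of_le_length (by simp; omega), List.take_replicate,
      Nat.min_eq_left hdL]
  -- now count the 1's
  have hcount : μ.count 1 = 1 := by
    simp [hμ, List.count_append, List.count_replicate]
  have hcount2 : ((d ++ μ).take (L+1)).count 1 = 0 := by
    have htk : (d ++ μ).take (L+1) = d ++ μ.take (L + 1 - d.length) := by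
      rw [List.take_append]
      congr 1
      · rw [List.take_of_length_le (by omega)]
    rw [htk]
    have h5 : μ.take (L + 1 - d.length) = List.replicate (L + 1 - d.length) 0 := by
      have hne' : d.length ≥ 1 := by
        cases d with
        | nil => exact absurd rfl hd
        | cons a l => simp
      rw [hμ, List.take_append_of_le_length (by simp; omega), List.take_replicate,
        Nat.min_eq_left (by omega)]
    rw [h5, List.count_append, h3, List.count_replicate, List.count_replicate]
    norm_num
  rw [← h1] at hcount2
  omega

include hiso hsum in
lemma compress_word (L : ℕ) (s t : List (Fin 2)) (hs : s.length ≤ L) (ht : t.length ≤ L) :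
    star (Sw S (List.replicate L (0:Fin 2) ++ [1])) * ((star (Sw S s) * Sw S t) *
      Sw S (List.replicate L (0:Fin 2) ++ [1])) = if s = t then 1 else 0 := by
  set μ : List (Fin 2) := List.replicate L 0 ++ [1] with hμ
  by_cases hst : s = t
  · subst hst
    rw [if_pos rfl, starSw_Sw hiso hsum s, one_mul, starSw_Sw hiso hsum μ]
  · rw [if_neg hst]
    have key : ∀ d : List (Fin 2), d ≠ [] → d.length ≤ L → star (Sw S μ) * (Sw S d * Sw S μ) = 0 := by
      intro d hd hdL
      rw [← Sw_append]
      refine starSw_Sw_zero hiso hsum μ (d ++ μ) (mu_not_prefix L d hd hdL) ?_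
      intro hpre
      have hlen := hpre.length_le
      rw [List.length_append] at hlen
      exact hd (List.eq_nil_of_length_eq_zero (by omega))
    by_cases h1 : s <+: t
    · obtain ⟨d, rfl⟩ := h1
      have hd : d ≠ [] := by rintro rfl; simp at hst
      have hdL : d.length ≤ L := by
        have := ht; simp [List.length_append] at this; omega
      rw [starSw_Sw_append hiso hsum s d]
      exact key d hd hdL
    · by_cases h2 : t <+: s
      · obtain ⟨d, rfl⟩ := h2
        have hd : d ≠ [] := by rintro rfl; simp at hst
        have hdL : d.length ≤ L := by
          have := hs; simp [List.length_append] at this; omega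
        have hstar : star (Sw S (t ++ d)) * Sw S t = star (Sw S d) := by
          calc star (Sw S (t ++ d)) * Sw S t = star (star (Sw S t) * Sw S (t ++ d)) := by
                simp [star_mul]
            _ = star (Sw S d) := by rw [starSw_Sw_append hiso hsum]
        rw [hstar]
        have : star (Sw S μ) * (star (Sw S d) * Sw S μ) = star (star (Sw S μ) * (Sw S d * Sw S μ)) := by
          simp only [star_mul, star_star, mul_assoc]
        rw [this, key d hd hdL, star_zero]
      · rw [starSw_Sw_zero hiso hsum s t h1 h2, zero_mul, mul_zero]

include hiso hsum in
lemma isometry_single {ι : Type*} [DecidableEq ι] (J : Finset ι) (m : ι → List (Fin 2))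
    (h : star (∑ p ∈ J, Sw S (m p)) * (∑ p ∈ J, Sw S (m p)) = 1) :
    (∃ w : List (Fin 2), (∑ p ∈ J, Sw S (m p)) = Sw S w) ∨ (1:A) = 0 := by
  classical
  set L := J.sup fun p => (m p).length with hL
  set μ : List (Fin 2) := List.replicate L 0 ++ [1] with hμ
  have h2 : (1:A) = ∑ p ∈ J, ∑ q ∈ J, (if m p = m q then (1:A) else 0) := by
    have e1 : star (Sw S μ) * (1 * Sw S μ) = 1 := by
      rw [one_mul, starSw_Sw hiso hsum]
    calc (1:A) = star (Sw S μ) * (1 * Sw S μ) := e1.symm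
      _ = star (Sw S μ) * ((star (∑ p ∈ J, Sw S (m p)) * ∑ p ∈ J, Sw S (m p)) * Sw S μ) := by
          rw [h]
      _ = ∑ p ∈ J, ∑ q ∈ J, star (Sw S μ) * ((star (Sw S (m p)) * Sw S (m q)) * Sw S μ) := by
          rw [star_sum, Finset.sum_mul_sum]
          simp only [Finset.sum_mul, Finset.mul_sum, mul_assoc]
      _ = ∑ p ∈ J, ∑ q ∈ J, (if m p = m q then (1:A) else 0) := by
          refine Finset.sum_congr rfl fun p hp => Finset.sum_congr rfl fun q hq => ?_
          exact compress_word hiso hsum L (m p) (m q) (Finset.le_sup (f := fun p => (m p).length) hp) (Finset.le_sup (f := fun p => (m p).length) hq)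
  rw [← Finset.sum_product'] at h2
  rw [Finset.sum_ite, Finset.sum_const, Finset.sum_const_zero, add_zero] at h2
  set N := ((J ×ˢ J).filter fun pq => m pq.1 = m pq.2).card with hN
  rcases eq_or_ne N 1 with hN1 | hN1
  · -- N = 1 forces J a singleton
    have hdiag : ∀ p ∈ J, (p, p) ∈ (J ×ˢ J).filter fun pq => m pq.1 = m pq.2 := by
      intro p hp
      simp [Finset.mem_filter, Finset.mem_product, hp]
    have hcard : J.card ≤ N := by
      rw [hN]
      exact Finset.card_le_card_of_injOn (fun p => (p, p)) hdiag
        (fun a _ b _ hab => (Prod.mk.injEq _ _ _ _).mp hab |>.1)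
    rcases Nat.lt_or_ge J.card 1 with hc | hc
    · -- J empty: sum is 0 and h says 0 = 1
      right
      have hJe : J = ∅ := Finset.card_eq_zero.mp (by omega)
      rw [hJe] at h
      simpa using h.symm
    · have hc1 : J.card = 1 := by omega
      obtain ⟨p0, hp0⟩ := Finset.card_eq_one.mp hc1
      left
      exact ⟨m p0, by rw [hp0, Finset.sum_singleton]⟩
  · -- N ≠ 1 forces the algebra to be trivial
    right
    have hsm : (N:ℂ) • (1:A) = 1 := by
      rw [Nat.cast_smul_eq_nsmul]
      exact h2.symm
    have hsub : ((N:ℂ) - 1) • (1:A) = 0 := by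
      rw [sub_smul, one_smul, hsm, sub_self]
    have hne : ((N:ℂ) - 1) ≠ 0 := by
      intro hc
      apply hN1
      have : (N:ℂ) = 1 := by linear_combination hc
      exact_mod_cast this
    calc (1:A) = ((N:ℂ) - 1)⁻¹ • (((N:ℂ) - 1) • (1:A)) := by
          rw [smul_smul, inv_mul_cancel₀ hne, one_smul]
      _ = 0 := by rw [hsub, smul_zero]

include hiso hsum in
lemma conj_Pw_mem_span {v : A} (hv : v ∈ Vset S) (hvU : star v * v = 1) (ν : List (Fin 2)) :
    v * Pw S ν * star v ∈ Submodule.span ℂ (Set.range (Pw S)) := by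
  classical
  obtain ⟨J, hJ⟩ := hv
  set j := (J.sup fun p => p.2.length) + 1 with hj
  have hPν : Pw S ν = ∑ l ∈ Wd j, Pw S (ν ++ l) := Pw_refine hiso hsum ν j
  have key : ∀ l ∈ Wd j, v * Pw S (ν ++ l) * star v ∈ Submodule.span ℂ (Set.range (Pw S)) := by
    intro l hl
    set g : List (Fin 2) × List (Fin 2) → List (Fin 2) :=
      fun p => p.1 ++ (ν ++ l).drop p.2.length with hg
    have hvS : v * Sw S (ν ++ l) = ∑ p ∈ J.filter (fun p => p.2 <+: (ν ++ l)), Sw S (g p) := by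
      rw [hJ, Finset.sum_mul, Finset.sum_filter]
      refine Finset.sum_congr rfl fun p hp => ?_
      by_cases hpre : p.2 <+: (ν ++ l)
      · rw [if_pos hpre]
        calc Sw S p.1 * star (Sw S p.2) * Sw S (ν ++ l)
            = Sw S p.1 * (star (Sw S p.2) * Sw S (ν ++ l)) := by rw [mul_assoc]
          _ = Sw S p.1 * Sw S ((ν ++ l).drop p.2.length) := by
              rw [starSw_Sw_prefix hiso hsum hpre]
          _ = Sw S (g p) := by rw [hg, ← Sw_append]
      · rw [if_neg hpre]
        have hnp : ¬ (ν ++ l) <+: p.2 := by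
          intro hpre2
          have hlen := hpre2.length_le
          have hsup : p.2.length ≤ J.sup fun p => p.2.length := Finset.le_sup (f := fun p : List (Fin 2) × List (Fin 2) => p.2.length) hp
          have hll : l.length = j := length_of_mem_Wd hl
          rw [List.length_append] at hlen
          omega
        rw [mul_assoc, starSw_Sw_zero hiso hsum _ _ hpre hnp, mul_zero]
    have hisometry : star (v * Sw S (ν ++ l)) * (v * Sw S (ν ++ l)) = 1 := by
      rw [star_mul]
      calc star (Sw S (ν ++ l)) * star v * (v * Sw S (ν ++ l))
          = star (Sw S (ν ++ l)) * ((star v * v) * Sw S (ν ++ l)) := by simp only [mul_assoc]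
        _ = 1 := by rw [hvU, one_mul, starSw_Sw hiso hsum]
    rw [hvS] at hisometry
    rcases isometry_single hiso hsum _ _ hisometry with ⟨w, hw⟩ | htriv
    · have hvw : v * Sw S (ν ++ l) = Sw S w := hvS.trans hw
      have hrw : v * Pw S (ν ++ l) * star v
          = (v * Sw S (ν ++ l)) * star (v * Sw S (ν ++ l)) := by
        simp only [Pw, star_mul, mul_assoc]
      rw [hrw, hvw]
      exact Submodule.subset_span ⟨w, rfl⟩
    · rw [all_zero htriv (v * Pw S (ν ++ l) * star v)]
      exact Submodule.zero_mem _
  rw [hPν, Finset.mul_sum, Finset.sum_mul]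
  exact Submodule.sum_mem _ fun l hl => key l hl

end SingleWord

section MainAux
variable {A : Type*} [CStarAlgebra A] [PartialOrder A] [StarOrderedRing A]
variable {S : Fin 2 → A}
variable (hiso : ∀ i, star (S i) * S i = 1)
  (hsum : S 0 * star (S 0) + S 1 * star (S 1) = 1)

lemma Pw_single (i : Fin 2) : Pw S [i] = S i * star (S i) := by
  simp [Pw, Sw]

include hiso hsum in
lemma Pw_idem (μ : List (Fin 2)) : Pw S μ * Pw S μ = Pw S μ := by
  calc Pw S μ * Pw S μ = Sw S μ * ((star (Sw S μ) * Sw S μ) * star (Sw S μ)) := by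
        simp only [Pw, mul_assoc]
    _ = Pw S μ := by rw [starSw_Sw hiso hsum, one_mul, Pw]

section identities
include hiso hsum

lemma gen_I1 : x0 S * Pw S [0] = S 0 * Pw S [0] := by
  have e00 : ∀ x : A, star (S 0) * (S 0 * x) = x := fun x => by
    rw [← mul_assoc, hiso 0, one_mul]
  have e01 : ∀ x : A, star (S 0) * (S 1 * x) = 0 := fun x => by
    rw [← mul_assoc, Srel hiso hsum 0 1]; simp
  have e10 : ∀ x : A, star (S 1) * (S 0 * x) = 0 := fun x => by
    rw [← mul_assoc, Srel hiso hsum 1 0]; simp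
  have e11 : ∀ x : A, star (S 1) * (S 1 * x) = x := fun x => by
    rw [← mul_assoc, hiso 1, one_mul]
  have r01 : star (S 0) * S 1 = 0 := by rw [Srel hiso hsum 0 1]; simp
  have r10 : star (S 1) * S 0 = 0 := by rw [Srel hiso hsum 1 0]; simp
  simp only [x0, Pw_single, add_mul, mul_add, mul_assoc, e00, e01, e10, e11,
    hiso 0, hiso 1, r01, r10, mul_zero, zero_mul, add_zero, zero_add, mul_one, one_mul]

lemma gen_I4 : star (x0 S) * Pw S [1] = S 1 * Pw S [1] := by
  have e00 : ∀ x : A, star (S 0) * (S 0 * x) = x := fun x => by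
    rw [← mul_assoc, hiso 0, one_mul]
  have e01 : ∀ x : A, star (S 0) * (S 1 * x) = 0 := fun x => by
    rw [← mul_assoc, Srel hiso hsum 0 1]; simp
  have e10 : ∀ x : A, star (S 1) * (S 0 * x) = 0 := fun x => by
    rw [← mul_assoc, Srel hiso hsum 1 0]; simp
  have e11 : ∀ x : A, star (S 1) * (S 1 * x) = x := fun x => by
    rw [← mul_assoc, hiso 1, one_mul]
  have r01 : star (S 0) * S 1 = 0 := by rw [Srel hiso hsum 0 1]; simp
  have r10 : star (S 1) * S 0 = 0 := by rw [Srel hiso hsum 1 0]; simp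
  simp only [x0, Pw_single, star_add, star_mul, star_star, add_mul, mul_add, mul_assoc,
    e00, e01, e10, e11, hiso 0, hiso 1, r01, r10,
    mul_zero, zero_mul, add_zero, zero_add, mul_one, one_mul]

lemma gen_I3 : star (tgen S) * Pw S [0] = S 1 * Pw S [0] := by
  have e00 : ∀ x : A, star (S 0) * (S 0 * x) = x := fun x => by
    rw [← mul_assoc, hiso 0, one_mul]
  have e01 : ∀ x : A, star (S 0) * (S 1 * x) = 0 := fun x => by
    rw [← mul_assoc, Srel hiso hsum 0 1]; simp
  have e10 : ∀ x : A, star (S 1) * (S 0 * x) = 0 := fun x => by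
    rw [← mul_assoc, Srel hiso hsum 1 0]; simp
  have e11 : ∀ x : A, star (S 1) * (S 1 * x) = x := fun x => by
    rw [← mul_assoc, hiso 1, one_mul]
  have r01 : star (S 0) * S 1 = 0 := by rw [Srel hiso hsum 0 1]; simp
  have r10 : star (S 1) * S 0 = 0 := by rw [Srel hiso hsum 1 0]; simp
  simp only [tgen, Pw_single, star_add, star_mul, star_star, add_mul, mul_add, mul_assoc,
    e00, e01, e10, e11, hiso 0, hiso 1, r01, r10,
    mul_zero, zero_mul, add_zero, zero_add, mul_one, one_mul]

lemma gen_I2 : (x0 S * (tgen S * star (x0 S))) * Pw S [1] = S 0 * Pw S [1] := by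
  have e00 : ∀ x : A, star (S 0) * (S 0 * x) = x := fun x => by
    rw [← mul_assoc, hiso 0, one_mul]
  have e01 : ∀ x : A, star (S 0) * (S 1 * x) = 0 := fun x => by
    rw [← mul_assoc, Srel hiso hsum 0 1]; simp
  have e10 : ∀ x : A, star (S 1) * (S 0 * x) = 0 := fun x => by
    rw [← mul_assoc, Srel hiso hsum 1 0]; simp
  have e11 : ∀ x : A, star (S 1) * (S 1 * x) = x := fun x => by
    rw [← mul_assoc, hiso 1, one_mul]
  have r01 : star (S 0) * S 1 = 0 := by rw [Srel hiso hsum 0 1]; simp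
  have r10 : star (S 1) * S 0 = 0 := by rw [Srel hiso hsum 1 0]; simp
  have step1 : star (x0 S) * Pw S [1] = S 1 * Pw S [1] := gen_I4 hiso hsum
  have step2 : tgen S * (S 1 * Pw S [1]) = S 1 * (S 0 * star (S 1)) := by
    simp only [tgen, Pw_single, add_mul, mul_add, mul_assoc, e00, e01, e10, e11,
      hiso 0, hiso 1, r01, r10, mul_zero, zero_mul, add_zero, zero_add, mul_one, one_mul]
  have step3 : x0 S * (S 1 * (S 0 * star (S 1))) = S 0 * Pw S [1] := by
    simp only [x0, Pw_single, add_mul, mul_add, mul_assoc, e00, e01, e10, e11,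
      hiso 0, hiso 1, r01, r10, mul_zero, zero_mul, add_zero, zero_add, mul_one, one_mul]
  calc (x0 S * (tgen S * star (x0 S))) * Pw S [1]
      = x0 S * (tgen S * (star (x0 S) * Pw S [1])) := by simp only [mul_assoc]
    _ = x0 S * (tgen S * (S 1 * Pw S [1])) := by rw [step1]
    _ = x0 S * (S 1 * (S 0 * star (S 1))) := by rw [step2]
    _ = S 0 * Pw S [1] := step3

end identities

lemma x0_mem_Tgrp : x0 S ∈ Tgrp S :=
  Submonoid.subset_closure (Or.inl (Or.inl ⟨0, rfl⟩))

lemma tgen_mem_Tgrp : tgen S ∈ Tgrp S :=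
  Submonoid.subset_closure (Or.inl (Or.inr rfl))

lemma star_x0_mem_Tgrp : star (x0 S) ∈ Tgrp S :=
  Submonoid.subset_closure (Or.inr ⟨x0 S, Or.inl ⟨0, rfl⟩, rfl⟩)

lemma star_tgen_mem_Tgrp : star (tgen S) ∈ Tgrp S :=
  Submonoid.subset_closure (Or.inr ⟨tgen S, Or.inr rfl, rfl⟩)

lemma tau_mem_Tgrp : x0 S * (tgen S * star (x0 S)) ∈ Tgrp S :=
  mul_mem x0_mem_Tgrp (mul_mem tgen_mem_Tgrp star_x0_mem_Tgrp)

end MainAux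

open scoped CStarAlgebra

theorem stmt_18 {A : Type*} [CStarAlgebra A] [PartialOrder A] [StarOrderedRing A]
    (S : Fin 2 → A)
    (hiso : ∀ i, star (S i) * S i = 1)
    (hsum : S 0 * star (S 0) + S 1 * star (S 1) = 1)
    (hgen : (StarAlgebra.adjoin ℂ (Set.range S)).topologicalClosure = ⊤)
    (u : A) (hu : u ∈ unitary A)
    (α : A →⋆ₐ[ℂ] A) (hα : ∀ i, α (S i) = u * S i)
    (hT : ∀ w ∈ Tgrp S, α w ∈ Vgrp S) :
    u ∈ Vgrp S ↔ ∀ x ∈ Ddiag S, α x ∈ Ddiag S := by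
  constructor
  · -- forward direction
    rintro ⟨huV, huU⟩ x hx
    have hu1 : star u * u = 1 := (Unitary.mem_iff.mp huU).1
    have hαP : ∀ μ : List (Fin 2), α (Pw S μ) ∈ Submodule.span ℂ (Set.range (Pw S)) := by
      intro μ
      induction μ with
      | nil =>
          have h1 : α (Pw S ([] : List (Fin 2))) = Pw S ([] : List (Fin 2)) := by
            simp [Pw, map_one]
          rw [h1]
          exact Submodule.subset_span ⟨[], rfl⟩
      | cons i μ ih =>
          have hPc : Pw S (i :: μ) = S i * (Pw S μ * star (S i)) := by
            simp only [Pw, Sw_cons, star_mul, mul_assoc]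
          have hα' : α (Pw S (i :: μ)) = (u * S i) * (α (Pw S μ) * star (u * S i)) := by
            rw [hPc, map_mul, map_mul, map_star, hα i]
          have key : ∀ z ∈ Submodule.span ℂ (Set.range (Pw S)),
              (u * S i) * (z * star (u * S i)) ∈ Submodule.span ℂ (Set.range (Pw S)) := by
            intro z hz
            induction hz using Submodule.span_induction with
            | mem z hz =>
                obtain ⟨ν, rfl⟩ := hz
                have heq : (u * S i) * (Pw S ν * star (u * S i)) = u * Pw S (i :: ν) * star u := by
                  have h2 : Pw S (i :: ν) = S i * (Pw S ν * star (S i)) := by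
                    simp only [Pw, Sw_cons, star_mul, mul_assoc]
                  rw [h2, star_mul]
                  simp only [mul_assoc]
                rw [heq]
                exact conj_Pw_mem_span hiso hsum huV hu1 (i :: ν)
            | zero => simp
            | add y z _ _ ihy ihz =>
                have : (u * S i) * ((y + z) * star (u * S i))
                    = (u * S i) * (y * star (u * S i)) + (u * S i) * (z * star (u * S i)) := by
                  rw [add_mul, mul_add]
                rw [this]
                exact Submodule.add_mem _ ihy ihz
            | smul c y _ ihy =>
                have : (u * S i) * ((c • y) * star (u * S i))
                    = c • ((u * S i) * (y * star (u * S i))) := by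
                  rw [smul_mul_assoc, mul_smul_comm]
                rw [this]
                exact Submodule.smul_mem _ c ihy
          rw [hα']
          exact key _ ih
    have hMaps : Set.MapsTo ⇑α
        ((Submodule.span ℂ (Set.range (Pw S)) : Submodule ℂ A) : Set A)
        ((Submodule.span ℂ (Set.range (Pw S)) : Submodule ℂ A) : Set A) := by
      intro z hz
      induction hz using Submodule.span_induction with
      | mem w hw => obtain ⟨ν, rfl⟩ := hw; exact hαP ν
      | zero => rw [map_zero]; exact Submodule.zero_mem _
      | add y z _ _ ihy ihz => rw [map_add]; exact Submodule.add_mem _ ihy ihz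
      | smul c y _ ihy => rw [map_smul]; exact Submodule.smul_mem _ c ihy
    exact mem_Ddiag_iff.mpr (map_mem_closure (map_continuous α) (mem_Ddiag_iff.mp hx) hMaps)
  · -- reverse direction
    intro hD
    refine ⟨?_, hu⟩
    -- the image of the first diagonal projection
    have hP0D : Pw S [0] ∈ Ddiag S :=
      Submodule.le_topologicalClosure _ (Submodule.subset_span ⟨[0], rfl⟩)
    have hpD : α (Pw S [0]) ∈ Ddiag S := hD _ hP0D
    have hps : star (α (Pw S [0])) = α (Pw S [0]) := by
      rw [← map_star]
      congr 1
      simp only [Pw, star_mul, star_star]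
    have hpp : α (Pw S [0]) * α (Pw S [0]) = α (Pw S [0]) := by
      rw [← map_mul, Pw_idem hiso hsum]
    obtain ⟨k, I, hIW, hpI⟩ := proj_rep hiso hsum hpD hps hpp
    -- basic identities
    have hq : (1 : A) - α (Pw S [0]) = α (Pw S [1]) := by
      have h1 : Pw S [0] + Pw S [1] = 1 := by
        rw [Pw_single 0, Pw_single 1]; exact hsum
      have h2 : α (Pw S [0]) + α (Pw S [1]) = 1 := by
        rw [← map_add, h1, map_one]
      exact (eq_sub_of_add_eq (by rwa [add_comm] at h2)).symm
    -- unitaries coming from T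
    obtain ⟨hx0V, -⟩ := hT _ (x0_mem_Tgrp (S := S))
    obtain ⟨htauV, -⟩ := hT _ (tau_mem_Tgrp (S := S))
    obtain ⟨hstV, -⟩ := hT _ (star_tgen_mem_Tgrp (S := S))
    obtain ⟨hsxV, -⟩ := hT _ (star_x0_mem_Tgrp (S := S))
    -- decomposition of α (S 0)
    have ha : α (S 0) = α (x0 S) * α (Pw S [0])
        + α (x0 S * (tgen S * star (x0 S))) * α (Pw S [1]) := by
      have d1 : α (S 0) * α (Pw S [0]) = α (x0 S) * α (Pw S [0]) := by
        rw [← map_mul, ← map_mul, ← gen_I1 hiso hsum]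
      have d2 : α (S 0) * α (Pw S [1]) = α (x0 S * (tgen S * star (x0 S))) * α (Pw S [1]) := by
        rw [← map_mul, ← map_mul, ← gen_I2 hiso hsum]
      calc α (S 0) = α (S 0) * (α (Pw S [0]) + α (Pw S [1])) := by
            rw [← map_add, show Pw S [0] + Pw S [1] = 1 by
              rw [Pw_single 0, Pw_single 1]; exact hsum, map_one, mul_one]
        _ = α (S 0) * α (Pw S [0]) + α (S 0) * α (Pw S [1]) := by rw [mul_add]
        _ = _ := by rw [d1, d2]
    have hb : α (S 1) = α (star (tgen S)) * α (Pw S [0])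
        + α (star (x0 S)) * α (Pw S [1]) := by
      have d1 : α (S 1) * α (Pw S [0]) = α (star (tgen S)) * α (Pw S [0]) := by
        rw [← map_mul, ← map_mul, ← gen_I3 hiso hsum]
      have d2 : α (S 1) * α (Pw S [1]) = α (star (x0 S)) * α (Pw S [1]) := by
        rw [← map_mul, ← map_mul, ← gen_I4 hiso hsum]
      calc α (S 1) = α (S 1) * (α (Pw S [0]) + α (Pw S [1])) := by
            rw [← map_add, show Pw S [0] + Pw S [1] = 1 by
              rw [Pw_single 0, Pw_single 1]; exact hsum, map_one, mul_one]
        _ = α (S 1) * α (Pw S [0]) + α (S 1) * α (Pw S [1]) := by rw [mul_add]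
        _ = _ := by rw [d1, d2]
    have hu_dec : u = α (S 0) * star (S 0) + α (S 1) * star (S 1) := by
      calc u = u * (S 0 * star (S 0) + S 1 * star (S 1)) := by rw [hsum, mul_one]
        _ = (u * S 0) * star (S 0) + (u * S 1) * star (S 1) := by
            rw [mul_add, ← mul_assoc, ← mul_assoc]
        _ = α (S 0) * star (S 0) + α (S 1) * star (S 1) := by rw [hα 0, hα 1]
    -- Vset memberships
    have hpV : α (Pw S [0]) ∈ Vset S := by
      rw [hpI]
      refine ⟨I.image fun l => (l, l), ?_⟩
      rw [Finset.sum_image (fun a _ b _ h => ((Prod.mk.injEq _ _ _ _).mp h).1)]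
      exact Finset.sum_congr rfl fun l _ => rfl
    have hqV : α (Pw S [1]) ∈ Vset S := by
      have hsd : α (Pw S [1]) = ∑ l ∈ Wd k \ I, Pw S l := by
        have h2 : (∑ l ∈ Wd k \ I, Pw S l) + ∑ l ∈ I, Pw S l = 1 := by
          rw [Finset.sum_sdiff hIW]
          exact sum_Wd_Pw hiso hsum k
        calc α (Pw S [1]) = 1 - α (Pw S [0]) := hq.symm
          _ = ∑ l ∈ Wd k \ I, Pw S l := by
              rw [hpI]
              exact (eq_sub_of_add_eq h2).symm
      rw [hsd]
      refine ⟨(Wd k \ I).image fun l => (l, l), ?_⟩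
      rw [Finset.sum_image (fun a _ b _ h => ((Prod.mk.injEq _ _ _ _).mp h).1)]
      exact Finset.sum_congr rfl fun l _ => rfl
    have hs0V : star (S 0) ∈ Vset S := by
      have := vset_word (S := S) [] [0]
      simpa [Sw] using this
    have hs1V : star (S 1) ∈ Vset S := by
      have := vset_word (S := S) [] [1]
      simpa [Sw] using this
    -- assemble
    rw [hu_dec, ha, hb]
    refine vset_add hiso hsum (vset_mul hiso hsum (vset_add hiso hsum
      (vset_mul hiso hsum hx0V hpV) (vset_mul hiso hsum htauV hqV)) hs0V)
      (vset_mul hiso hsum (vset_add hiso hsum (vset_mul hiso hsum hstV hpV)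
        (vset_mul hiso hsum hsxV hqV)) hs1V)
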